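/- Let λ, μ be C¹ and φ be C² on an open subset of (0,1)×ℝ satisfying the wave equation (W). For t ∈ (0,1) set A₁ = (1/8)(−φ̇ + φ/(t log t) + φ′e^{μ−λ})² and A₂ = (1/8)(−φ̇ + φ/(t log t) − φ′e^{μ−λ})². Then (∂_t + e^{μ−λ}∂_r)A₁ = −(1/(4t))(1 + 1/log t)[(−φ̇ + φ/(t log t))² + φ′²e^{2μ−2λ}] + (1/(2t))(1 + 1/log t)φ′²e^{2μ−2λ} + (1/4)(λ̇ − μ̇ + 1/t)(φ̇ − φ′e^{μ−λ})(−φ̇ + φ/(t log t) + φ′e^{μ−λ}), and (∂_t − e^{μ−λ}∂_r)A₂ = −(1/(4t))(1 + 1/log t)[(−φ̇ + φ/(t log t))² + φ′²e^{2μ−2λ}] + (1/(2t))(1 + 1/log t)φ′²e^{2μ−2λ} + (1/4)(λ̇ − μ̇ + 1/t)(φ̇ + φ′e^{μ−λ})(−φ̇ + φ/(t log t) − φ′e^{μ−λ}). -/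

import Mathlib

open Real MeasureTheory Set Filter

noncomputable section

/-- Partial derivative with respect to the first (time) variable. -/
def pt (u : ℝ → ℝ → ℝ) (t r : ℝ) : ℝ := deriv (fun s => u s r) t

/-- Partial derivative with respect to the second (space) variable. -/
def pr (u : ℝ → ℝ → ℝ) (t r : ℝ) : ℝ := deriv (fun s => u t s) r

/-- Second partial derivative in time. -/
def ptt (u : ℝ → ℝ → ℝ) (t r : ℝ) : ℝ := deriv (fun s => pt u s r) t

/-- Second partial derivative in space. -/
def prr (u : ℝ → ℝ → ℝ) (t r : ℝ) : ℝ := deriv (fun s => pr u t s) r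

/-- Vlasov contribution to the energy density. -/
def vRho (f : ℝ → ℝ → ℝ → ℝ → ℝ) (t r : ℝ) : ℝ :=
  (π / t ^ 2) * ∫ w : ℝ, ∫ F in Ioi (0 : ℝ), Real.sqrt (1 + w ^ 2 + F / t ^ 2) * f t r w F

/-- Vlasov contribution to the radial pressure. -/
def vP (f : ℝ → ℝ → ℝ → ℝ → ℝ) (t r : ℝ) : ℝ :=
  (π / t ^ 2) * ∫ w : ℝ, ∫ F in Ioi (0 : ℝ),
    (w ^ 2 / Real.sqrt (1 + w ^ 2 + F / t ^ 2)) * f t r w F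

/-- Vlasov contribution to the momentum density. -/
def vJ (f : ℝ → ℝ → ℝ → ℝ → ℝ) (t r : ℝ) : ℝ :=
  (π / t ^ 2) * ∫ w : ℝ, ∫ F in Ioi (0 : ℝ), w * f t r w F

/-- Energy density ρ of the Einstein-Vlasov-scalar field system. -/
def rho (f : ℝ → ℝ → ℝ → ℝ → ℝ) (lam mu phi : ℝ → ℝ → ℝ) (t r : ℝ) : ℝ :=
  vRho f t r + (1 / 2) * (Real.exp (-(2 * mu t r)) * (pt phi t r) ^ 2
    + Real.exp (-(2 * lam t r)) * (pr phi t r) ^ 2)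

/-- Radial pressure p of the Einstein-Vlasov-scalar field system. -/
def pres (f : ℝ → ℝ → ℝ → ℝ → ℝ) (lam mu phi : ℝ → ℝ → ℝ) (t r : ℝ) : ℝ :=
  vP f t r + (1 / 2) * (Real.exp (-(2 * mu t r)) * (pt phi t r) ^ 2
    + Real.exp (-(2 * lam t r)) * (pr phi t r) ^ 2)

/-- Momentum density j of the Einstein-Vlasov-scalar field system. -/
def mom (f : ℝ → ℝ → ℝ → ℝ → ℝ) (lam mu phi : ℝ → ℝ → ℝ) (t r : ℝ) : ℝ :=
  vJ f t r - Real.exp (-(lam t r + mu t r)) * pt phi t r * pr phi t r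

/-- A regular solution of the surface-symmetric Einstein-Vlasov-scalar field system
with curvature parameter `k` on the time interval `I ⊆ (0,∞)`. -/
structure IsRegularSolution (k : ℝ) (f : ℝ → ℝ → ℝ → ℝ → ℝ) (lam mu phi : ℝ → ℝ → ℝ)
    (I : Set ℝ) : Prop where
  f_contDiff : ContDiffOn ℝ 1 (fun q : ℝ × ℝ × ℝ × ℝ => f q.1 q.2.1 q.2.2.1 q.2.2.2)
    {q : ℝ × ℝ × ℝ × ℝ | q.1 ∈ I ∧ 0 ≤ q.2.2.2}
  f_nonneg : ∀ t ∈ I, ∀ (r w F : ℝ), 0 ≤ f t r w F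
  f_periodic : ∀ (t r w F : ℝ), f t (r + 1) w F = f t r w F
  supp_bounded : ∀ a ∈ I, ∀ b ∈ I, ∃ C : ℝ, ∀ t ∈ Icc a b, ∀ (r w F : ℝ),
    f t r w F ≠ 0 → |w| ≤ C ∧ F ≤ C
  lam_contDiff : ContDiffOn ℝ 1 (fun q : ℝ × ℝ => lam q.1 q.2) (I ×ˢ (univ : Set ℝ))
  mu_contDiff : ContDiffOn ℝ 2 (fun q : ℝ × ℝ => mu q.1 q.2) (I ×ˢ (univ : Set ℝ))
  phi_contDiff : ContDiffOn ℝ 2 (fun q : ℝ × ℝ => phi q.1 q.2) (I ×ˢ (univ : Set ℝ))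
  lam_periodic : ∀ (t r : ℝ), lam t (r + 1) = lam t r
  mu_periodic : ∀ (t r : ℝ), mu t (r + 1) = mu t r
  phi_periodic : ∀ (t r : ℝ), phi t (r + 1) = phi t r
  /-- (V): the Vlasov equation. -/
  eqV : ∀ t ∈ I, ∀ (r w F : ℝ), 0 ≤ F →
    deriv (fun s => f s r w F) t
      + (Real.exp (mu t r - lam t r) * w / Real.sqrt (1 + w ^ 2 + F / t ^ 2))
          * deriv (fun s => f t s w F) r
      - (pt lam t r * w + Real.exp (mu t r - lam t r) * pr mu t r
          * Real.sqrt (1 + w ^ 2 + F / t ^ 2)) * deriv (fun s => f t r s F) w = 0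
  /-- (E1). -/
  eqE1 : ∀ t ∈ I, ∀ r : ℝ,
    Real.exp (-(2 * mu t r)) * (2 * t * pt lam t r + 1) + k
      = 8 * π * t ^ 2 * rho f lam mu phi t r
  /-- (E2). -/
  eqE2 : ∀ t ∈ I, ∀ r : ℝ,
    Real.exp (-(2 * mu t r)) * (2 * t * pt mu t r - 1) - k
      = 8 * π * t ^ 2 * pres f lam mu phi t r
  /-- (E3). -/
  eqE3 : ∀ t ∈ I, ∀ r : ℝ,
    pr mu t r = -(4 * π * t) * Real.exp (lam t r + mu t r) * mom f lam mu phi t r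
  /-- (W): the wave equation for the scalar field. -/
  eqW : ∀ t ∈ I, ∀ r : ℝ,
    Real.exp (-(2 * lam t r)) * prr phi t r - Real.exp (-(2 * mu t r)) * ptt phi t r
      - Real.exp (-(2 * mu t r)) * (pt lam t r - pt mu t r + 2 / t) * pt phi t r
      - Real.exp (-(2 * lam t r)) * (pr lam t r - pr mu t r) * pr phi t r = 0

/-- Admissible initial data at `t = 1` for the surface-symmetric
Einstein-Vlasov-scalar field system. -/
structure IsInitialData (f0 : ℝ → ℝ → ℝ → ℝ) (lam0 mu0 phi0 psi : ℝ → ℝ) : Prop where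
  f0_contDiff : ContDiffOn ℝ 1 (fun q : ℝ × ℝ × ℝ => f0 q.1 q.2.1 q.2.2)
    {q : ℝ × ℝ × ℝ | 0 ≤ q.2.2}
  f0_nonneg : ∀ (r w F : ℝ), 0 ≤ f0 r w F
  f0_periodic : ∀ (r w F : ℝ), f0 (r + 1) w F = f0 r w F
  f0_supp : ∃ C : ℝ, ∀ (r w F : ℝ), f0 r w F ≠ 0 → |w| ≤ C ∧ F ≤ C
  lam0_C1 : ContDiff ℝ 1 lam0
  psi_C1 : ContDiff ℝ 1 psi
  mu0_C2 : ContDiff ℝ 2 mu0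
  phi0_C2 : ContDiff ℝ 2 phi0
  lam0_periodic : ∀ r : ℝ, lam0 (r + 1) = lam0 r
  mu0_periodic : ∀ r : ℝ, mu0 (r + 1) = mu0 r
  phi0_periodic : ∀ r : ℝ, phi0 (r + 1) = phi0 r
  psi_periodic : ∀ r : ℝ, psi (r + 1) = psi r
  /-- The constraint (E3) holds at `t = 1`. -/
  constraint : ∀ r : ℝ, deriv mu0 r = -(4 * π) * Real.exp (lam0 r + mu0 r) *
    (π * (∫ w : ℝ, ∫ F in Ioi (0 : ℝ), w * f0 r w F)
      - Real.exp (-(lam0 r + mu0 r)) * psi r * deriv phi0 r)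

/-- A solution attains the initial data `(f0, lam0, mu0, phi0, psi)` at `t = 1`. -/
def AttainsData (f : ℝ → ℝ → ℝ → ℝ → ℝ) (lam mu phi : ℝ → ℝ → ℝ)
    (f0 : ℝ → ℝ → ℝ → ℝ) (lam0 mu0 phi0 psi : ℝ → ℝ) : Prop :=
  (∀ (r w F : ℝ), f 1 r w F = f0 r w F) ∧ (∀ r : ℝ, lam 1 r = lam0 r) ∧
    (∀ r : ℝ, mu 1 r = mu0 r) ∧ (∀ r : ℝ, phi 1 r = phi0 r) ∧
    (∀ r : ℝ, pt phi 1 r = psi r)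

/-- A left-maximal regular solution on `(T,1]` attaining the given data at `t = 1`:
it admits no extension to a regular solution on `(T',1]` with `0 ≤ T' < T`. -/
def IsLeftMaximalSolution (k : ℝ) (f : ℝ → ℝ → ℝ → ℝ → ℝ) (lam mu phi : ℝ → ℝ → ℝ)
    (T : ℝ) (f0 : ℝ → ℝ → ℝ → ℝ) (lam0 mu0 phi0 psi : ℝ → ℝ) : Prop :=
  IsRegularSolution k f lam mu phi (Ioc T 1) ∧
  AttainsData f lam mu phi f0 lam0 mu0 phi0 psi ∧
  ∀ T' : ℝ, 0 ≤ T' → T' < T →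
    ¬ ∃ (f' : ℝ → ℝ → ℝ → ℝ → ℝ) (lam' mu' phi' : ℝ → ℝ → ℝ),
      IsRegularSolution k f' lam' mu' phi' (Ioc T' 1) ∧
      AttainsData f' lam' mu' phi' f0 lam0 mu0 phi0 psi ∧
      (∀ t ∈ Ioc T 1, ∀ (r w F : ℝ), f' t r w F = f t r w F) ∧
      (∀ t ∈ Ioc T 1, ∀ r : ℝ, lam' t r = lam t r ∧ mu' t r = mu t r ∧ phi' t r = phi t r)

open Topology

private lemma lineT (r t : ℝ) : HasDerivAt (fun s : ℝ => (s, r)) ((1 : ℝ), (0 : ℝ)) t :=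
  (hasDerivAt_id t).prodMk (hasDerivAt_const t r)

private lemma lineR (t r : ℝ) : HasDerivAt (fun s : ℝ => (t, s)) ((0 : ℝ), (1 : ℝ)) r :=
  (hasDerivAt_const r t).prodMk (hasDerivAt_id r)

set_option maxHeartbeats 1600000 in
/-- Lemma 3.1: identities for the null derivatives of
`A₁ = (1/8)(−φ̇ + φ/(t log t) + φ′e^{μ−λ})²` and
`A₂ = (1/8)(−φ̇ + φ/(t log t) − φ′e^{μ−λ})²` on an open subset of `(0,1) × ℝ`
where the wave equation (W) holds. -/
theorem stmt6 (U : Set (ℝ × ℝ)) (hU : IsOpen U)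
    (hUsub : ∀ q ∈ U, 0 < q.1 ∧ q.1 < 1)
    (lam mu phi : ℝ → ℝ → ℝ)
    (hlam : ContDiffOn ℝ 1 (fun q : ℝ × ℝ => lam q.1 q.2) U)
    (hmu : ContDiffOn ℝ 1 (fun q : ℝ × ℝ => mu q.1 q.2) U)
    (hphi : ContDiffOn ℝ 2 (fun q : ℝ × ℝ => phi q.1 q.2) U)
    (hW : ∀ q ∈ U,
      Real.exp (-(2 * lam q.1 q.2)) * prr phi q.1 q.2
        - Real.exp (-(2 * mu q.1 q.2)) * ptt phi q.1 q.2
        - Real.exp (-(2 * mu q.1 q.2)) * (pt lam q.1 q.2 - pt mu q.1 q.2 + 2 / q.1)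
            * pt phi q.1 q.2
        - Real.exp (-(2 * lam q.1 q.2)) * (pr lam q.1 q.2 - pr mu q.1 q.2)
            * pr phi q.1 q.2 = 0) :
    let A1 : ℝ → ℝ → ℝ := fun t r => (1 / 8) * (-(pt phi t r)
      + phi t r / (t * Real.log t) + pr phi t r * Real.exp (mu t r - lam t r)) ^ 2
    let A2 : ℝ → ℝ → ℝ := fun t r => (1 / 8) * (-(pt phi t r)
      + phi t r / (t * Real.log t) - pr phi t r * Real.exp (mu t r - lam t r)) ^ 2
    ∀ q ∈ U,
      (pt A1 q.1 q.2 + Real.exp (mu q.1 q.2 - lam q.1 q.2) * pr A1 q.1 q.2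
        = -(1 / (4 * q.1)) * (1 + 1 / Real.log q.1) *
            ((-(pt phi q.1 q.2) + phi q.1 q.2 / (q.1 * Real.log q.1)) ^ 2
              + (pr phi q.1 q.2) ^ 2 * Real.exp (2 * mu q.1 q.2 - 2 * lam q.1 q.2))
          + (1 / (2 * q.1)) * (1 + 1 / Real.log q.1) * (pr phi q.1 q.2) ^ 2
              * Real.exp (2 * mu q.1 q.2 - 2 * lam q.1 q.2)
          + (1 / 4) * (pt lam q.1 q.2 - pt mu q.1 q.2 + 1 / q.1)
              * (pt phi q.1 q.2 - pr phi q.1 q.2 * Real.exp (mu q.1 q.2 - lam q.1 q.2))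
              * (-(pt phi q.1 q.2) + phi q.1 q.2 / (q.1 * Real.log q.1)
                  + pr phi q.1 q.2 * Real.exp (mu q.1 q.2 - lam q.1 q.2))) ∧
      (pt A2 q.1 q.2 - Real.exp (mu q.1 q.2 - lam q.1 q.2) * pr A2 q.1 q.2
        = -(1 / (4 * q.1)) * (1 + 1 / Real.log q.1) *
            ((-(pt phi q.1 q.2) + phi q.1 q.2 / (q.1 * Real.log q.1)) ^ 2
              + (pr phi q.1 q.2) ^ 2 * Real.exp (2 * mu q.1 q.2 - 2 * lam q.1 q.2))
          + (1 / (2 * q.1)) * (1 + 1 / Real.log q.1) * (pr phi q.1 q.2) ^ 2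
              * Real.exp (2 * mu q.1 q.2 - 2 * lam q.1 q.2)
          + (1 / 4) * (pt lam q.1 q.2 - pt mu q.1 q.2 + 1 / q.1)
              * (pt phi q.1 q.2 + pr phi q.1 q.2 * Real.exp (mu q.1 q.2 - lam q.1 q.2))
              * (-(pt phi q.1 q.2) + phi q.1 q.2 / (q.1 * Real.log q.1)
                  - pr phi q.1 q.2 * Real.exp (mu q.1 q.2 - lam q.1 q.2))) := by
  intro A1 A2 q hq
  obtain ⟨t, r⟩ := q
  obtain ⟨ht0, ht1⟩ := hUsub (t, r) hq
  have htne : t ≠ 0 := ne_of_gt ht0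
  have hlog : Real.log t ≠ 0 := ne_of_lt (Real.log_neg ht0 ht1)
  have hg : t * Real.log t ≠ 0 := mul_ne_zero htne hlog
  set Φ : ℝ × ℝ → ℝ := fun p => phi p.1 p.2 with hPhidef
  have hU2 : ∀ p ∈ U, ContDiffAt ℝ 2 Φ p := fun p hp => hphi.contDiffAt (hU.mem_nhds hp)
  set D1 : ℝ × ℝ → (ℝ × ℝ →L[ℝ] ℝ) := fderiv ℝ Φ with hD1def
  have hdiffU : ∀ p ∈ U, HasFDerivAt Φ (D1 p) p := fun p hp =>
    ((hU2 p hp).differentiableAt two_ne_zero).hasFDerivAt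
  set D2 : (ℝ × ℝ) →L[ℝ] (ℝ × ℝ →L[ℝ] ℝ) := fderiv ℝ D1 (t, r) with hD2def
  have hD2 : HasFDerivAt D1 D2 (t, r) :=
    ((((hU2 (t, r) hq).fderiv_right (m := 1) (by norm_num)).differentiableAt
      one_ne_zero).hasFDerivAt)
  have hsym : D2 (0, 1) (1, 0) = D2 (1, 0) (0, 1) :=
    second_derivative_symmetric_of_eventually
      (Filter.eventually_of_mem (hU.mem_nhds hq) hdiffU) hD2 _ _
  -- first partial derivatives of phi on U
  have hptu : ∀ p ∈ U, pt phi p.1 p.2 = D1 p (1, 0) := fun p hp =>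
    ((hdiffU p hp).comp_hasDerivAt p.1 (lineT p.2 p.1) :).deriv
  have hpru : ∀ p ∈ U, pr phi p.1 p.2 = D1 p (0, 1) := fun p hp =>
    ((hdiffU p hp).comp_hasDerivAt p.2 (lineR p.1 p.2) :).deriv
  -- partial derivatives of mu and lam at (t, r)
  have hMdiff : HasFDerivAt (fun p : ℝ × ℝ => mu p.1 p.2)
      (fderiv ℝ (fun p : ℝ × ℝ => mu p.1 p.2) (t, r)) (t, r) :=
    (((hmu.contDiffAt (hU.mem_nhds hq)).differentiableAt one_ne_zero).hasFDerivAt)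
  have hLdiff : HasFDerivAt (fun p : ℝ × ℝ => lam p.1 p.2)
      (fderiv ℝ (fun p : ℝ × ℝ => lam p.1 p.2) (t, r)) (t, r) :=
    (((hlam.contDiffAt (hU.mem_nhds hq)).differentiableAt one_ne_zero).hasFDerivAt)
  set Mt : ℝ := fderiv ℝ (fun p : ℝ × ℝ => mu p.1 p.2) (t, r) (1, 0) with hMtdef
  set Mr : ℝ := fderiv ℝ (fun p : ℝ × ℝ => mu p.1 p.2) (t, r) (0, 1) with hMrdef
  set Lt : ℝ := fderiv ℝ (fun p : ℝ × ℝ => lam p.1 p.2) (t, r) (1, 0) with hLtdef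
  set Lr : ℝ := fderiv ℝ (fun p : ℝ × ℝ => lam p.1 p.2) (t, r) (0, 1) with hLrdef
  have hMuT : HasDerivAt (fun s => mu s r) Mt t := (hMdiff.comp_hasDerivAt t (lineT r t) :)
  have hMuR : HasDerivAt (fun s => mu t s) Mr r := (hMdiff.comp_hasDerivAt r (lineR t r) :)
  have hLaT : HasDerivAt (fun s => lam s r) Lt t := (hLdiff.comp_hasDerivAt t (lineT r t) :)
  have hLaR : HasDerivAt (fun s => lam t s) Lr r := (hLdiff.comp_hasDerivAt r (lineR t r) :)
  have hMt : pt mu t r = Mt := hMuT.deriv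
  have hMr : pr mu t r = Mr := hMuR.deriv
  have hLt : pt lam t r = Lt := hLaT.deriv
  have hLr : pr lam t r = Lr := hLaR.deriv
  -- directional derivatives of the first derivative of phi
  have hApt : ∀ v : ℝ × ℝ, HasDerivAt (fun s => D1 (s, r) v) (D2 (1, 0) v) t := fun v => by
    have h := (hD2.comp_hasDerivAt t (lineT r t)).clm_apply (hasDerivAt_const t v)
    simpa using h
  have hApr : ∀ v : ℝ × ℝ, HasDerivAt (fun s => D1 (t, s) v) (D2 (0, 1) v) r := fun v => by
    have h := (hD2.comp_hasDerivAt r (lineR t r)).clm_apply (hasDerivAt_const r v)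
    simpa using h
  -- scalar abbreviations
  set a : ℝ := D1 (t, r) (1, 0) with hadef
  set b : ℝ := D1 (t, r) (0, 1) with hbdef
  set c11 : ℝ := D2 (1, 0) (1, 0) with hc11def
  set c12 : ℝ := D2 (1, 0) (0, 1) with hc12def
  set c21 : ℝ := D2 (0, 1) (1, 0) with hc21def
  set c22 : ℝ := D2 (0, 1) (0, 1) with hc22def
  set E : ℝ := Real.exp (mu t r - lam t r) with hEdef
  have ha : pt phi t r = a := hptu (t, r) hq
  have hb : pr phi t r = b := hpru (t, r) hq
  -- neighbourhood facts
  have hmemT : ∀ᶠ s in 𝓝 t, (s, r) ∈ U :=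
    ((continuous_id.prodMk continuous_const).continuousAt).preimage_mem_nhds
      (hU.mem_nhds hq)
  have hmemR : ∀ᶠ s in 𝓝 r, (t, s) ∈ U :=
    ((continuous_const.prodMk continuous_id).continuousAt).preimage_mem_nhds
      (hU.mem_nhds hq)
  -- second derivatives of phi
  have hptt : ptt phi t r = c11 := by
    have hev : (fun s => pt phi s r) =ᶠ[𝓝 t] fun s => D1 (s, r) (1, 0) :=
      hmemT.mono fun s hs => hptu (s, r) hs
    exact hev.deriv_eq.trans (hApt (1, 0)).deriv
  have hprr : prr phi t r = c22 := by
    have hev : (fun s => pr phi t s) =ᶠ[𝓝 r] fun s => D1 (t, s) (0, 1) :=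
      hmemR.mono fun s hs => hpru (t, s) hs
    exact hev.deriv_eq.trans (hApr (0, 1)).deriv
  -- exponential identities
  have hE2 : Real.exp (2 * mu t r - 2 * lam t r) = E ^ 2 := by
    rw [hEdef, sq, ← Real.exp_add]; congr 1; ring
  have hLM : Real.exp (-(2 * lam t r)) = Real.exp (-(2 * mu t r)) * E ^ 2 := by
    rw [hEdef, sq, ← Real.exp_add, ← Real.exp_add]; congr 1; ring
  -- the wave equation in scalar form
  have hwave := hW (t, r) hq
  simp only at hwave
  rw [hptt, hprr, ha, hb, hMt, hLt, hMr, hLr, hLM] at hwave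
  have hc11 : c11 = E ^ 2 * c22 - (Lt - Mt + 2 / t) * a - E ^ 2 * (Lr - Mr) * b := by
    have hne : Real.exp (-(2 * mu t r)) ≠ 0 := Real.exp_ne_zero _
    have h2 : Real.exp (-(2 * mu t r))
        * (c11 - (E ^ 2 * c22 - (Lt - Mt + 2 / t) * a - E ^ 2 * (Lr - Mr) * b)) = 0 := by
      linear_combination -hwave
    rcases mul_eq_zero.mp h2 with h | h
    · exact absurd h hne
    · exact sub_eq_zero.mp h
  -- basic one-dimensional derivative facts
  have hPhiT : HasDerivAt (fun s => phi s r) a t := ((hdiffU (t, r) hq).comp_hasDerivAt t (lineT r t) :)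
  have hPhiR : HasDerivAt (fun s => phi t s) b r := ((hdiffU (t, r) hq).comp_hasDerivAt r (lineR t r) :)
  have hexpT : HasDerivAt (fun s => Real.exp (mu s r - lam s r)) (E * (Mt - Lt)) t := by
    have h := (hMuT.sub hLaT).exp
    rw [hEdef]; exact h
  have hexpR : HasDerivAt (fun s => Real.exp (mu t s - lam t s)) (E * (Mr - Lr)) r := by
    have h := (hMuR.sub hLaR).exp
    rw [hEdef]; exact h
  have hgT : HasDerivAt (fun s : ℝ => s * Real.log s) (Real.log t + 1) t := by
    have h := (hasDerivAt_id' t).mul (Real.hasDerivAt_log htne)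
    rw [mul_inv_cancel₀ htne, one_mul] at h
    exact h
  have hQT : HasDerivAt (fun s => phi s r / (s * Real.log s))
      ((a * (t * Real.log t) - phi t r * (Real.log t + 1)) / (t * Real.log t) ^ 2) t :=
    hPhiT.div hgT hg
  have hQR : HasDerivAt (fun s => phi t s / (t * Real.log t)) (b / (t * Real.log t)) r :=
    hPhiR.div_const _
  -- derivatives of the quantities inside A1 and A2
  have hX1T : HasDerivAt (fun s => -(D1 (s, r) (1, 0)) + phi s r / (s * Real.log s)
      + D1 (s, r) (0, 1) * Real.exp (mu s r - lam s r))
      (-c11 + (a * (t * Real.log t) - phi t r * (Real.log t + 1)) / (t * Real.log t) ^ 2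
        + (c12 * E + b * (E * (Mt - Lt)))) t :=
    ((hApt (1, 0)).neg.add hQT).add ((hApt (0, 1)).mul hexpT)
  have hX1R : HasDerivAt (fun s => -(D1 (t, s) (1, 0)) + phi t s / (t * Real.log t)
      + D1 (t, s) (0, 1) * Real.exp (mu t s - lam t s))
      (-c21 + b / (t * Real.log t) + (c22 * E + b * (E * (Mr - Lr)))) r :=
    ((hApr (1, 0)).neg.add hQR).add ((hApr (0, 1)).mul hexpR)
  have hX2T : HasDerivAt (fun s => -(D1 (s, r) (1, 0)) + phi s r / (s * Real.log s)
      - D1 (s, r) (0, 1) * Real.exp (mu s r - lam s r))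
      (-c11 + (a * (t * Real.log t) - phi t r * (Real.log t + 1)) / (t * Real.log t) ^ 2
        - (c12 * E + b * (E * (Mt - Lt)))) t :=
    ((hApt (1, 0)).neg.add hQT).sub ((hApt (0, 1)).mul hexpT)
  have hX2R : HasDerivAt (fun s => -(D1 (t, s) (1, 0)) + phi t s / (t * Real.log t)
      - D1 (t, s) (0, 1) * Real.exp (mu t s - lam t s))
      (-c21 + b / (t * Real.log t) - (c22 * E + b * (E * (Mr - Lr)))) r :=
    ((hApr (1, 0)).neg.add hQR).sub ((hApr (0, 1)).mul hexpR)
  -- derivatives of A1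
  have hevA1T : (fun s => A1 s r) =ᶠ[𝓝 t] (fun s => (1 / 8 : ℝ) * (-(D1 (s, r) (1, 0))
      + phi s r / (s * Real.log s) + D1 (s, r) (0, 1) * Real.exp (mu s r - lam s r)) ^ 2) :=
    hmemT.mono fun s hs => by
      show (1 / 8 : ℝ) * (-(pt phi s r) + phi s r / (s * Real.log s)
        + pr phi s r * Real.exp (mu s r - lam s r)) ^ 2 = _
      rw [hptu (s, r) hs, hpru (s, r) hs]
  have hevA1R : (fun s => A1 t s) =ᶠ[𝓝 r] (fun s => (1 / 8 : ℝ) * (-(D1 (t, s) (1, 0))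
      + phi t s / (t * Real.log t) + D1 (t, s) (0, 1) * Real.exp (mu t s - lam t s)) ^ 2) :=
    hmemR.mono fun s hs => by
      show (1 / 8 : ℝ) * (-(pt phi t s) + phi t s / (t * Real.log t)
        + pr phi t s * Real.exp (mu t s - lam t s)) ^ 2 = _
      rw [hptu (t, s) hs, hpru (t, s) hs]
  have hevA2T : (fun s => A2 s r) =ᶠ[𝓝 t] (fun s => (1 / 8 : ℝ) * (-(D1 (s, r) (1, 0))
      + phi s r / (s * Real.log s) - D1 (s, r) (0, 1) * Real.exp (mu s r - lam s r)) ^ 2) :=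
    hmemT.mono fun s hs => by
      show (1 / 8 : ℝ) * (-(pt phi s r) + phi s r / (s * Real.log s)
        - pr phi s r * Real.exp (mu s r - lam s r)) ^ 2 = _
      rw [hptu (s, r) hs, hpru (s, r) hs]
  have hevA2R : (fun s => A2 t s) =ᶠ[𝓝 r] (fun s => (1 / 8 : ℝ) * (-(D1 (t, s) (1, 0))
      + phi t s / (t * Real.log t) - D1 (t, s) (0, 1) * Real.exp (mu t s - lam t s)) ^ 2) :=
    hmemR.mono fun s hs => by
      show (1 / 8 : ℝ) * (-(pt phi t s) + phi t s / (t * Real.log t)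
        - pr phi t s * Real.exp (mu t s - lam t s)) ^ 2 = _
      rw [hptu (t, s) hs, hpru (t, s) hs]
  have hptA1 : pt A1 t r = (1 / 8 : ℝ) * ((2 : ℕ)
      * (-a + phi t r / (t * Real.log t) + b * E) ^ 1
      * (-c11 + (a * (t * Real.log t) - phi t r * (Real.log t + 1)) / (t * Real.log t) ^ 2
          + (c12 * E + b * (E * (Mt - Lt))))) :=
    hevA1T.deriv_eq.trans ((hX1T.pow 2).const_mul (1 / 8 : ℝ)).deriv
  have hprA1 : pr A1 t r = (1 / 8 : ℝ) * ((2 : ℕ)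
      * (-a + phi t r / (t * Real.log t) + b * E) ^ 1
      * (-c21 + b / (t * Real.log t) + (c22 * E + b * (E * (Mr - Lr))))) :=
    hevA1R.deriv_eq.trans ((hX1R.pow 2).const_mul (1 / 8 : ℝ)).deriv
  have hptA2 : pt A2 t r = (1 / 8 : ℝ) * ((2 : ℕ)
      * (-a + phi t r / (t * Real.log t) - b * E) ^ 1
      * (-c11 + (a * (t * Real.log t) - phi t r * (Real.log t + 1)) / (t * Real.log t) ^ 2
          - (c12 * E + b * (E * (Mt - Lt))))) :=
    hevA2T.deriv_eq.trans ((hX2T.pow 2).const_mul (1 / 8 : ℝ)).deriv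
  have hprA2 : pr A2 t r = (1 / 8 : ℝ) * ((2 : ℕ)
      * (-a + phi t r / (t * Real.log t) - b * E) ^ 1
      * (-c21 + b / (t * Real.log t) - (c22 * E + b * (E * (Mr - Lr))))) :=
    hevA2R.deriv_eq.trans ((hX2R.pow 2).const_mul (1 / 8 : ℝ)).deriv
  constructor
  · rw [hptA1, hprA1, ha, hb, hMt, hLt, hE2, hc11, hsym]
    push_cast
    field_simp
    ring
  · rw [hptA2, hprA2, ha, hb, hMt, hLt, hE2, hc11, hsym]
    push_cast
    field_simp
    ring
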